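/- arXiv:1708.09830 — 2 statements merged into one kernel-verified Lean document; each statement's English description precedes it below -/
import Mathlib

section
/- The pushforward of two-dimensional Lebesgue measure on the set ℝ × ([0, π) \ {π/2}) under the map (r, θ) ↦ r / cos θ equals 2 times one-dimensional Lebesgue measure on ℝ. -/
open MeasureTheory Set
open scoped ENNReal

noncomputable section

lemma cos_ne_zero_aux {θ : ℝ} (hθ : θ ∈ Set.Ico 0 Real.pi \ {Real.pi / 2}) :
    Real.cos θ ≠ 0 := by
  intro h0
  apply hθ.2
  have h1 : θ ∈ Set.Icc 0 Real.pi := ⟨hθ.1.1, hθ.1.2.le⟩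
  have h2 : Real.pi / 2 ∈ Set.Icc 0 Real.pi :=
    ⟨by positivity, by linarith [Real.pi_pos]⟩
  have := Real.injOn_cos h1 h2 (by rw [h0, Real.cos_pi_div_two])
  simpa using this

lemma lintegral_abs_cos_aux :
    ∫⁻ θ in Set.Ico 0 Real.pi \ {Real.pi / 2}, ENNReal.ofReal |Real.cos θ| = 2 := by
  have hae : (Set.Ico 0 Real.pi \ {Real.pi / 2} : Set ℝ) =ᵐ[volume] Set.Ico 0 Real.pi := by
    rw [MeasureTheory.diff_ae_eq_self]
    exact measure_mono_null Set.inter_subset_right (measure_singleton _)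
  rw [setLIntegral_congr hae]
  have hint : IntegrableOn (fun θ => |Real.cos θ|) (Set.Ico 0 Real.pi) volume := by
    exact (Real.continuous_cos.abs.integrableOn_Icc).mono_set Set.Ico_subset_Icc_self
  rw [← ofReal_integral_eq_lintegral_ofReal hint
      (Filter.Eventually.of_forall fun θ => abs_nonneg _)]
  have hval : ∫ θ in Set.Ico 0 Real.pi, |Real.cos θ| = 2 := by
    rw [setIntegral_congr_set MeasureTheory.Ico_ae_eq_Ioc,
      ← intervalIntegral.integral_of_le Real.pi_pos.le]
    have h1 : ∫ x in (0 : ℝ)..(Real.pi / 2), |Real.cos x| = 1 := by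
      have he : Set.EqOn (fun x => |Real.cos x|) Real.cos (Set.uIcc 0 (Real.pi / 2)) := by
        intro x hx
        rw [Set.uIcc_of_le (by positivity)] at hx
        exact abs_of_nonneg (Real.cos_nonneg_of_mem_Icc
          ⟨by linarith [hx.1, Real.pi_pos], hx.2⟩)
      have hc := intervalIntegral.integral_congr (μ := MeasureTheory.volume) he
      rw [hc]
      simp [integral_cos]
    have h2 : ∫ x in (Real.pi / 2)..Real.pi, |Real.cos x| = 1 := by
      have he : Set.EqOn (fun x => |Real.cos x|) (fun x => -Real.cos x)
          (Set.uIcc (Real.pi / 2) Real.pi) := by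
        intro x hx
        rw [Set.uIcc_of_le (by linarith [Real.pi_pos])] at hx
        exact abs_of_nonpos (Real.cos_nonpos_of_pi_div_two_le_of_le hx.1
          (by linarith [hx.2, Real.pi_pos]))
      have hc := intervalIntegral.integral_congr (μ := MeasureTheory.volume) he
      rw [hc]
      simp [integral_cos]
    have hadd := intervalIntegral.integral_add_adjacent_intervals
      (a := 0) (b := Real.pi / 2) (c := Real.pi) (f := fun x => |Real.cos x|) (μ := MeasureTheory.volume)
      (Real.continuous_cos.abs.intervalIntegrable _ _)
      (Real.continuous_cos.abs.intervalIntegrable _ _)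
    rw [← hadd, h1, h2]; norm_num
  rw [hval]
  norm_num

/-- The pushforward of two-dimensional Lebesgue measure on `ℝ × ([0, π) \ {π/2})` under
the map `(r, θ) ↦ r / cos θ` equals twice one-dimensional Lebesgue measure on `ℝ`. -/
theorem map_lineParam_xAxis :
    Measure.map (fun q : ℝ × ℝ => q.1 / Real.cos q.2)
        (volume.restrict (Set.univ ×ˢ (Set.Ico 0 Real.pi \ {Real.pi / 2})))
      = (2 : ℝ≥0∞) • (volume : Measure ℝ) := by
  set s : Set ℝ := Set.Ico 0 Real.pi \ {Real.pi / 2} with hs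
  have hsm : MeasurableSet s := measurableSet_Ico.diff (measurableSet_singleton _)
  have hf : Measurable (fun q : ℝ × ℝ => q.1 / Real.cos q.2) :=
    measurable_fst.div (Real.measurable_cos.comp measurable_snd)
  have hrestr : (volume.restrict (Set.univ ×ˢ s) : Measure (ℝ × ℝ))
      = (volume : Measure ℝ).prod (volume.restrict s) := by
    rw [MeasureTheory.Measure.volume_eq_prod, ← Measure.prod_restrict, Measure.restrict_univ]
  rw [hrestr]
  ext A hA
  rw [Measure.map_apply hf hA, Measure.prod_apply_symm (hf hA)]
  have hslice : ∀ θ ∈ s,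
      volume ((fun r : ℝ => (r, θ)) ⁻¹' ((fun q : ℝ × ℝ => q.1 / Real.cos q.2) ⁻¹' A))
        = ENNReal.ofReal |Real.cos θ| * volume A := by
    intro θ hθ
    have hc : Real.cos θ ≠ 0 := cos_ne_zero_aux hθ
    have hpre : (fun r : ℝ => (r, θ)) ⁻¹' ((fun q : ℝ × ℝ => q.1 / Real.cos q.2) ⁻¹' A)
        = (fun r : ℝ => (Real.cos θ)⁻¹ * r) ⁻¹' A := by
      ext r; simp [div_eq_inv_mul]
    rw [hpre, ← Measure.map_apply (measurable_const_mul _) hA,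
      Real.map_volume_mul_left (inv_ne_zero hc)]
    simp [abs_inv]
  calc ∫⁻ θ, volume ((fun r : ℝ => (r, θ)) ⁻¹'
          ((fun q : ℝ × ℝ => q.1 / Real.cos q.2) ⁻¹' A)) ∂(volume.restrict s)
      = ∫⁻ θ in s, ENNReal.ofReal |Real.cos θ| * volume A := by
        apply setLIntegral_congr_fun hsm
        exact hslice
    _ = (∫⁻ θ in s, ENNReal.ofReal |Real.cos θ|) * volume A := by
        rw [lintegral_mul_const]
        exact (Real.measurable_cos.abs).ennreal_ofReal
    _ = 2 * volume A := by rw [lintegral_abs_cos_aux]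
    _ = ((2 : ℝ≥0∞) • (volume : Measure ℝ)) A := by simp
end
end

section
/- Let {(R_n, Θ_n)}_{n ∈ ℕ} be a Poisson line process of intensity λ > 0. Then the point process of intersections of the associated lines with the x-axis is a Poisson point process of intensity 2λ/π on ℝ: for every Borel set B ⊆ ℝ of finite Lebesgue measure, the count #{n : Θ_n ≠ π/2 and R_n / cos Θ_n ∈ B} has the Poisson distribution with mean (2λ/π)·Leb(B), and for pairwise disjoint Borel sets B₁, …, B_k ⊆ ℝ these counts are mutually independent. -/
open MeasureTheory Set Pointwise
open scoped ENNReal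

noncomputable section

/-- The strip `ℝ × [0, π)` of line parameters. -/
def strip : Set (ℝ × ℝ) := Set.univ ×ˢ Set.Ico 0 Real.pi

/-- The number (in `ℝ≥0∞`) of indices `n` such that `(R n ω, Θ n ω) ∈ A`. -/
def paramCount {Ω : Type*} (R Θ : ℕ → Ω → ℝ) (A : Set (ℝ × ℝ)) (ω : Ω) : ℝ≥0∞ :=
  ({n : ℕ | (R n ω, Θ n ω) ∈ A}.encard : ℝ≥0∞)

/-- The Poisson probability mass function with mean `m`, evaluated at `k`. -/
def poissonProb (m : ℝ) (k : ℕ) : ℝ :=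
  Real.exp (-m) * m ^ k / (Nat.factorial k)

/-- `(R, Θ)` is a Poisson line process of intensity `lam`. -/
def IsPoissonLineProcess {Ω : Type*} [MeasurableSpace Ω] (P : Measure Ω) (lam : ℝ)
    (R Θ : ℕ → Ω → ℝ) : Prop :=
  (∀ n, Measurable (R n)) ∧ (∀ n, Measurable (Θ n)) ∧
  (∀ n ω, Θ n ω ∈ Set.Ico 0 Real.pi) ∧
  (∀ A : Set (ℝ × ℝ), MeasurableSet A → A ⊆ strip → volume A < ⊤ → ∀ k : ℕ,
      P {ω | paramCount R Θ A ω = (k : ℝ≥0∞)} =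
        ENNReal.ofReal (poissonProb (lam / Real.pi * (volume A).toReal) k)) ∧
  (∀ (m : ℕ) (A : Fin m → Set (ℝ × ℝ)),
      (∀ i, MeasurableSet (A i)) → (∀ i, A i ⊆ strip) → (∀ i, volume (A i) < ⊤) →
      Pairwise (Function.onFun Disjoint A) →
      ProbabilityTheory.iIndepFun
        (fun i => paramCount R Θ (A i)) P)

/-- The number (in `ℝ≥0∞`) of lines of the process whose intersection point with the
`x`-axis lies in `B ⊆ ℝ`. -/
def xAxisCount {Ω : Type*} (R Θ : ℕ → Ω → ℝ) (B : Set ℝ) (ω : Ω) : ℝ≥0∞ :=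
  ({n : ℕ | Θ n ω ≠ Real.pi / 2 ∧ R n ω / Real.cos (Θ n ω) ∈ B}.encard : ℝ≥0∞)


-- integral of |cos| over [0, π]
lemma abs_cos_integral : ∫ x in (0:ℝ)..Real.pi, |Real.cos x| = 2 := by
  have h1 : ∫ x in (0:ℝ)..(Real.pi/2), |Real.cos x| = 1 := by
    rw [intervalIntegral.integral_congr (g := Real.cos)]
    · simp [integral_cos]
    · intro x hx
      rw [uIcc_of_le (by positivity)] at hx
      exact abs_of_nonneg (Real.cos_nonneg_of_mem_Icc ⟨by linarith [hx.1, Real.pi_pos], hx.2⟩)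
  have h2 : ∫ x in (Real.pi/2)..Real.pi, |Real.cos x| = 1 := by
    rw [intervalIntegral.integral_congr (g := fun x => -Real.cos x)]
    · simp [integral_cos, Real.sin_pi, Real.sin_pi_div_two]
    · intro x hx
      rw [uIcc_of_le (by linarith [Real.pi_pos])] at hx
      exact abs_of_nonpos (Real.cos_nonpos_of_pi_div_two_le_of_le hx.1
        (by linarith [hx.2, Real.pi_pos]))
  have := intervalIntegral.integral_add_adjacent_intervals (a := (0:ℝ)) (b := Real.pi/2)
    (c := Real.pi) (f := fun x => |Real.cos x|)
    ((Real.continuous_cos.abs).intervalIntegrable (μ := volume) _ _)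
    ((Real.continuous_cos.abs).intervalIntegrable (μ := volume) _ _)
  rw [h1, h2] at this
  linarith [this]

def lineSet (B : Set ℝ) : Set (ℝ × ℝ) :=
  {p : ℝ × ℝ | p.2 ∈ Set.Ico 0 Real.pi ∧ p.2 ≠ Real.pi / 2 ∧ p.1 / Real.cos p.2 ∈ B}

lemma lineSet_measurable {B : Set ℝ} (hB : MeasurableSet B) : MeasurableSet (lineSet B) := by
  have h1 : Measurable fun p : ℝ × ℝ => p.1 / Real.cos p.2 :=
    measurable_fst.div (Real.measurable_cos.comp measurable_snd)
  exact ((measurable_snd (measurableSet_Ico (a := (0:ℝ)) (b := Real.pi))).inter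
    (((measurable_snd (measurableSet_singleton (Real.pi/2))).compl).inter (h1 hB)))

-- section of lineSet at θ
lemma lineSet_section {B : Set ℝ} (θ : ℝ) :
    {r : ℝ | (r, θ) ∈ lineSet B} =
      if θ ∈ Set.Ico 0 Real.pi ∧ θ ≠ Real.pi / 2 then Real.cos θ • B else ∅ := by
  split_ifs with hθ
  · have hc : Real.cos θ ≠ 0 := by
      rcases lt_or_gt_of_ne hθ.2 with hl | hl
      · exact ne_of_gt (Real.cos_pos_of_mem_Ioo ⟨by linarith [hθ.1.1, Real.pi_pos], hl⟩)
      · exact ne_of_lt (Real.cos_neg_of_pi_div_two_lt_of_lt hl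
          (by linarith [hθ.1.2, Real.pi_pos]))
    ext r
    simp only [lineSet, mem_setOf_eq, mem_smul_set_iff_inv_smul_mem₀ hc, smul_eq_mul]
    constructor
    · rintro ⟨-, -, hr⟩; rwa [inv_mul_eq_div]
    · intro hr; exact ⟨hθ.1, hθ.2, by rwa [div_eq_inv_mul]⟩
  · ext r; simp only [lineSet, mem_setOf_eq, mem_empty_iff_false, iff_false]
    tauto

lemma volume_lineSet {B : Set ℝ} (hB : MeasurableSet B) :
    volume (lineSet B) = 2 * volume B := by
  classical
  set S : Set (ℝ × ℝ) := Prod.swap ⁻¹' lineSet B with hS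
  have hSmeas : MeasurableSet S := (lineSet_measurable hB).preimage measurable_swap
  have hswap : lineSet B = Prod.swap ⁻¹' S := by
    ext p; simp [hS]
  have hvol : volume (lineSet B) = (volume : Measure (ℝ × ℝ)) S := by
    rw [hswap, ← Measure.map_apply measurable_swap hSmeas, Measure.volume_eq_prod,
      Measure.prod_swap, ← Measure.volume_eq_prod]
  rw [hvol, Measure.volume_eq_prod, Measure.prod_apply hSmeas]
  have hsec : ∀ θ : ℝ, Prod.mk θ ⁻¹' S =
      if θ ∈ Set.Ico 0 Real.pi ∧ θ ≠ Real.pi / 2 then Real.cos θ • B else ∅ := by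
    intro θ
    rw [← lineSet_section]
    ext r
    simp [hS, lineSet]
  have key : ∀ θ : ℝ, volume (Prod.mk θ ⁻¹' S) =
      (Set.Ico (0:ℝ) Real.pi \ {Real.pi/2}).indicator
        (fun θ => ENNReal.ofReal |Real.cos θ| * volume B) θ := by
    intro θ
    rw [hsec θ]
    by_cases hθ : θ ∈ Set.Ico 0 Real.pi ∧ θ ≠ Real.pi / 2
    · rw [if_pos hθ, indicator_of_mem (by simp [hθ.1, hθ.2]),
        Measure.addHaar_smul]
      simp
    · rw [if_neg hθ, indicator_of_notMem (by simpa [not_and_or] using hθ)]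
      simp
  simp_rw [key]
  rw [lintegral_indicator (measurableSet_Ico.diff (measurableSet_singleton _)),
    Measure.restrict_congr_set (diff_ae_eq_self.2 (measure_inter_null_of_null_right _ (Real.volume_singleton))),
    lintegral_mul_const _ (by
      exact (Real.measurable_cos.abs).ennreal_ofReal)]
  have hint : ∫⁻ θ in Set.Ico (0:ℝ) Real.pi, ENNReal.ofReal |Real.cos θ| = 2 := by
    rw [← ofReal_integral_eq_lintegral_ofReal]
    · rw [integral_Ico_eq_integral_Ioo, ← integral_Ioc_eq_integral_Ioo,
        ← intervalIntegral.integral_of_le Real.pi_pos.le, abs_cos_integral]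
      norm_num
    · exact (Real.continuous_cos.abs).integrableOn_Icc.mono_set Ico_subset_Icc_self
    · exact Filter.Eventually.of_forall (fun x => abs_nonneg _)
  rw [hint]

lemma lineSet_subset_strip (B : Set ℝ) : lineSet B ⊆ strip :=
  fun p hp => ⟨trivial, hp.1⟩

lemma lineSet_volume_lt_top {B : Set ℝ} (hB : MeasurableSet B) (hv : volume B < ⊤) :
    volume (lineSet B) < ⊤ := by
  rw [volume_lineSet hB]
  exact ENNReal.mul_lt_top (by norm_num) hv

lemma xAxisCount_eq_paramCount {Ω : Type*} (R Θ : ℕ → Ω → ℝ)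
    (hrange : ∀ n ω, Θ n ω ∈ Set.Ico 0 Real.pi) (B : Set ℝ) :
    xAxisCount R Θ B = paramCount R Θ (lineSet B) := by
  funext ω
  unfold xAxisCount paramCount
  congr 2
  ext n
  simp only [mem_setOf_eq, lineSet]
  exact ⟨fun ⟨h1, h2⟩ => ⟨hrange n ω, h1, h2⟩, fun ⟨_, h1, h2⟩ => ⟨h1, h2⟩⟩


/-- The intersections of the lines of a Poisson line process of intensity `lam > 0` with
the `x`-axis form a Poisson point process of intensity `2·lam/π` on `ℝ`: counts on Borel
sets of finite measure are Poisson with mean `(2·lam/π)·Leb(B)`, and counts on pairwise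
disjoint Borel sets are mutually independent. -/
theorem poissonLineProcess_xAxis_poisson
    {Ω : Type*} [MeasurableSpace Ω] (P : Measure Ω) [IsProbabilityMeasure P]
    (lam : ℝ) (hlam : 0 < lam) (R Θ : ℕ → Ω → ℝ)
    (h : IsPoissonLineProcess P lam R Θ) :
    (∀ B : Set ℝ, MeasurableSet B → volume B < ⊤ → ∀ k : ℕ,
        P {ω | xAxisCount R Θ B ω = (k : ℝ≥0∞)} =
          ENNReal.ofReal (poissonProb (2 * lam / Real.pi * (volume B).toReal) k)) ∧
    (∀ (m : ℕ) (B : Fin m → Set ℝ),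
        (∀ i, MeasurableSet (B i)) → (∀ i, volume (B i) < ⊤) →
        Pairwise (Function.onFun Disjoint B) →
        ProbabilityTheory.iIndepFun
          (fun i => xAxisCount R Θ (B i)) P) := by
  obtain ⟨hR, hΘ, hrange, hcount, hindep⟩ := h
  constructor
  · intro B hB hv k
    rw [xAxisCount_eq_paramCount R Θ hrange B,
      hcount (lineSet B) (lineSet_measurable hB) (lineSet_subset_strip B)
        (lineSet_volume_lt_top hB hv) k]
    congr 2
    rw [volume_lineSet hB, ENNReal.toReal_mul]
    have h2 : ((2 : ℝ≥0∞)).toReal = 2 := by norm_num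
    rw [h2]; ring
  · intro m B hBm hBv hBd
    have key := hindep m (fun i => lineSet (B i))
      (fun i => lineSet_measurable (hBm i))
      (fun i => lineSet_subset_strip _)
      (fun i => lineSet_volume_lt_top (hBm i) (hBv i))
      (fun i j hij => Set.disjoint_left.2 (fun p hpi hpj =>
        Set.disjoint_left.1 (hBd hij) hpi.2.2 hpj.2.2))
    convert key using 1
    funext i
    exact xAxisCount_eq_paramCount R Θ hrange (B i)
end
end
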